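/- With the sets A_k and A = ⋃_{k≥1} A_k defined as follows: n₁ = 1, n_{k+1} = 2^{2n_k+2}, A_k = {n_k+1, ..., n_k + 2^{n_k+1}} ∪ {3·2^{n_k}, ..., (2^{n_k+1}+2)·2^{n_k}}, one has liminf_{n→∞} A(n)/√n ≤ 2, where A(n) = |{a ∈ A : a ≤ n}|. -/

import Mathlib

/-- The recursive sequence: n₁ = 1, n_{k+1} = 2^{2 n_k + 2} (indexed from 0). -/
def nSeq : ℕ → ℕ
  | 0 => 1
  | k + 1 => 2 ^ (2 * nSeq k + 2)

/-- A_k = [n_k+1, n_k+2^{n_k+1}] ∪ {j·2^{n_k} : 3 ≤ j ≤ 2^{n_k+1}+2}. -/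
def Ablock (k : ℕ) : Set ℕ :=
  {m | (nSeq k + 1 ≤ m ∧ m ≤ nSeq k + 2 ^ (nSeq k + 1)) ∨
       ∃ j : ℕ, 3 ≤ j ∧ j ≤ 2 ^ (nSeq k + 1) + 2 ∧ m = j * 2 ^ (nSeq k)}

/-- Counting function: number of elements of `A` that are at most `n`. -/
noncomputable def countUpTo (A : Set ℕ) (n : ℕ) : ℕ := (A ∩ Set.Iic n).ncard

lemma nseq_lt_succ (k : ℕ) : nSeq k < nSeq (k + 1) := by
  show nSeq k < 2 ^ (2 * nSeq k + 2)
  have := Nat.lt_two_pow_self (n := 2 * nSeq k + 2)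
  omega

lemma nseq_strictMono : StrictMono nSeq := strictMono_nat_of_lt_succ nseq_lt_succ

lemma nseq_ge (k : ℕ) : k ≤ nSeq k := nseq_strictMono.le_apply

lemma nseq_gap (k : ℕ) : nSeq k + k + 3 ≤ nSeq (k + 1) := by
  have h1 : k ≤ nSeq k := nseq_ge k
  have h2 := Nat.lt_two_pow_self (n := 2 * nSeq k + 2)
  show nSeq k + k + 3 ≤ 2 ^ (2 * nSeq k + 2)
  omega

/-- Finset superset of `Ablock j`. -/
def Bfin (j : ℕ) : Finset ℕ :=
  Finset.Icc (nSeq j + 1) (nSeq j + 2 ^ (nSeq j + 1)) ∪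
    (Finset.Icc 3 (2 ^ (nSeq j + 1) + 2)).image (· * 2 ^ (nSeq j))

lemma ablock_subset_bfin (j : ℕ) : Ablock j ⊆ ↑(Bfin j) := by
  intro m hm
  simp only [Bfin, Finset.coe_union, Set.mem_union, Finset.coe_image, Finset.coe_Icc,
    Set.mem_Icc, Set.mem_image]
  rcases hm with h | ⟨i, h3, hle, heq⟩
  · exact Or.inl h
  · exact Or.inr ⟨i, ⟨h3, hle⟩, heq.symm⟩

lemma bfin_card (j : ℕ) : (Bfin j).card ≤ 2 ^ (nSeq j + 2) := by
  have h1 : (Finset.Icc (nSeq j + 1) (nSeq j + 2 ^ (nSeq j + 1))).card = 2 ^ (nSeq j + 1) := by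
    rw [Nat.card_Icc]
    generalize (2 : ℕ) ^ (nSeq j + 1) = X
    omega
  have h2 : ((Finset.Icc 3 (2 ^ (nSeq j + 1) + 2)).image (· * 2 ^ (nSeq j))).card
      ≤ 2 ^ (nSeq j + 1) := by
    calc _ ≤ (Finset.Icc 3 (2 ^ (nSeq j + 1) + 2)).card := Finset.card_image_le
    _ = 2 ^ (nSeq j + 1) := by
      rw [Nat.card_Icc]
      generalize (2 : ℕ) ^ (nSeq j + 1) = X
      omega
  calc (Bfin j).card ≤ _ + _ := Finset.card_union_le _ _
    _ ≤ 2 ^ (nSeq j + 1) + 2 ^ (nSeq j + 1) := by omega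
    _ = 2 ^ (nSeq j + 2) := by ring

lemma ablock_lb {j m : ℕ} (hm : m ∈ Ablock j) : nSeq j < m := by
  rcases hm with h | ⟨i, h3, _, heq⟩
  · omega
  · subst heq
    calc nSeq j < 2 ^ nSeq j := Nat.lt_two_pow_self
      _ ≤ 3 * 2 ^ nSeq j := Nat.le_mul_of_pos_left _ (by norm_num)
      _ ≤ i * 2 ^ nSeq j := Nat.mul_le_mul_right _ h3

lemma ablock_ub {j m : ℕ} (hm : m ∈ Ablock j) : m ≤ nSeq (j + 1) := by
  have hN : nSeq (j + 1) = 2 ^ (2 * nSeq j + 2) := rfl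
  rcases hm with h | ⟨i, _, hle, heq⟩
  · have h1 : nSeq j < 2 ^ (nSeq j + 1) := Nat.lt_two_pow_self.trans
      (Nat.pow_lt_pow_right one_lt_two (by omega))
    have h2 : 2 ^ (nSeq j + 2) ≤ 2 ^ (2 * nSeq j + 2) :=
      Nat.pow_le_pow_right (by norm_num) (by omega)
    have : 2 ^ (nSeq j + 1) + 2 ^ (nSeq j + 1) = 2 ^ (nSeq j + 2) := by ring
    omega
  · have : i * 2 ^ (nSeq j) ≤ (2 ^ (nSeq j + 1) + 2) * 2 ^ (nSeq j) :=
      Nat.mul_le_mul_right _ hle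
    have he : (2 ^ (nSeq j + 1) + 2) * 2 ^ (nSeq j) = 2 ^ (2 * nSeq j + 1) + 2 ^ (nSeq j + 1) := by
      ring
    have h2 : 2 ^ (2 * nSeq j + 1) + 2 ^ (2 * nSeq j + 1) = 2 ^ (2 * nSeq j + 2) := by ring
    have h3 : 2 ^ (nSeq j + 1) ≤ 2 ^ (2 * nSeq j + 1) :=
      Nat.pow_le_pow_right (by norm_num) (by omega)
    omega

lemma sum_pow_bound (l : ℕ) :
    ∑ j ∈ Finset.range (l + 1), 2 ^ (nSeq j + 2) ≤ 2 ^ (nSeq l + 3) := by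
  induction l with
  | zero => simp [nSeq]
  | succ l ih =>
    rw [Finset.sum_range_succ]
    have h1 : nSeq l + 3 ≤ nSeq (l + 1) + 2 := by
      have := nseq_lt_succ l; omega
    have h2 : 2 ^ (nSeq l + 3) ≤ 2 ^ (nSeq (l + 1) + 2) :=
      Nat.pow_le_pow_right (by norm_num) h1
    have h3 : 2 ^ (nSeq (l+1) + 2) + 2 ^ (nSeq (l+1) + 2) = 2 ^ (nSeq (l+1) + 3) := by ring
    omega

lemma count_bound (l : ℕ) :
    countUpTo (⋃ k, Ablock k) (nSeq (l + 2)) ≤ 2 ^ (nSeq (l + 1) + 2) + 2 ^ (nSeq l + 3) := by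
  have hsub : (⋃ k, Ablock k) ∩ Set.Iic (nSeq (l + 2)) ⊆
      ↑((Finset.range (l + 2)).biUnion Bfin) := by
    rintro m ⟨hmA, hmI⟩
    obtain ⟨j, hj⟩ := Set.mem_iUnion.mp hmA
    have hjle : j < l + 2 := by
      by_contra h
      push_neg at h
      have h1 : nSeq (l + 2) ≤ nSeq j := nseq_strictMono.monotone h
      have h2 : nSeq j < m := ablock_lb hj
      exact absurd hmI (by simp only [Set.mem_Iic]; omega)
    have := ablock_subset_bfin j hj
    simp only [Finset.coe_biUnion, Set.mem_iUnion, Finset.mem_coe, Finset.mem_range]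
    exact ⟨j, hjle, this⟩
  calc countUpTo (⋃ k, Ablock k) (nSeq (l + 2))
      ≤ (↑((Finset.range (l + 2)).biUnion Bfin) : Set ℕ).ncard :=
        Set.ncard_le_ncard hsub ((Finset.range (l + 2)).biUnion Bfin).finite_toSet
    _ = ((Finset.range (l + 2)).biUnion Bfin).card := Set.ncard_coe_finset _
    _ ≤ ∑ j ∈ Finset.range (l + 2), (Bfin j).card := Finset.card_biUnion_le
    _ ≤ ∑ j ∈ Finset.range (l + 2), 2 ^ (nSeq j + 2) :=
        Finset.sum_le_sum fun j _ => bfin_card j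
    _ = ∑ j ∈ Finset.range (l + 1), 2 ^ (nSeq j + 2) + 2 ^ (nSeq (l + 1) + 2) :=
        Finset.sum_range_succ _ _
    _ ≤ 2 ^ (nSeq (l + 1) + 2) + 2 ^ (nSeq l + 3) := by
        have := sum_pow_bound l; omega

lemma ratio_bound (l : ℕ) :
    (countUpTo (⋃ k, Ablock k) (nSeq (l + 2)) : ℝ) / Real.sqrt (nSeq (l + 2))
      ≤ 2 + (1 / 2) ^ (l + 1) := by
  have ha : nSeq (l + 1) = nSeq (l + 1) := rfl
  set a := nSeq (l + 1) with ha
  have hsqrt : Real.sqrt (nSeq (l + 2)) = 2 ^ (a + 1) := by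
    have h0 : ((nSeq (l + 2) : ℕ) : ℝ) = ((2 : ℝ) ^ (a + 1)) ^ 2 := by
      show ((2 ^ (2 * a + 2) : ℕ) : ℝ) = _
      push_cast
      rw [← pow_mul]
      congr 1
      ring
    rw [h0, Real.sqrt_sq (by positivity)]
  rw [hsqrt]
  rw [div_le_iff₀ (by positivity)]
  have hcount := count_bound l
  have hgap : nSeq l + l + 3 ≤ a := nseq_gap l
  -- 2^(nSeq l + 3) * 2^(l+1) ≤ 2^(a+1)
  have hkey : (2 : ℝ) ^ (nSeq l + 3) * 2 ^ (l + 1) ≤ 2 ^ (a + 1) := by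
    rw [← pow_add]
    apply pow_le_pow_right₀ (by norm_num)
    omega
  have hc : (countUpTo (⋃ k, Ablock k) (nSeq (l + 2)) : ℝ)
      ≤ 2 ^ (a + 2) + 2 ^ (nSeq l + 3) := by
    calc (countUpTo (⋃ k, Ablock k) (nSeq (l + 2)) : ℝ)
        ≤ ((2 ^ (a + 2) + 2 ^ (nSeq l + 3) : ℕ) : ℝ) := by exact_mod_cast hcount
      _ = 2 ^ (a + 2) + 2 ^ (nSeq l + 3) := by push_cast; ring
  calc (countUpTo (⋃ k, Ablock k) (nSeq (l + 2)) : ℝ)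
      ≤ 2 ^ (a + 2) + 2 ^ (nSeq l + 3) := hc
    _ ≤ (2 + (1 / 2) ^ (l + 1)) * 2 ^ (a + 1) := by
        rw [add_mul]
        have h1 : (2 : ℝ) ^ (a + 2) = 2 * 2 ^ (a + 1) := by ring
        have h2 : (2 : ℝ) ^ (nSeq l + 3) ≤ (1 / 2) ^ (l + 1) * 2 ^ (a + 1) := by
          have he : ((1 : ℝ) / 2) ^ (l + 1) * 2 ^ (a + 1) = 2 ^ (a + 1) / 2 ^ (l + 1) := by
            rw [div_pow, one_pow]; ring
          rw [he, le_div_iff₀ (by positivity)]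
          exact hkey
        linarith [h1, h2]

theorem stmt_3 :
    Filter.liminf
      (fun n : ℕ => (countUpTo (⋃ k, Ablock k) n : ℝ) / Real.sqrt n) Filter.atTop ≤ 2 := by
  apply le_of_forall_pos_le_add
  intro ε hε
  apply Filter.liminf_le_of_frequently_le
  · rw [Filter.frequently_atTop]
    intro N
    obtain ⟨K, hK⟩ := exists_pow_lt_of_lt_one hε (by norm_num : (1 / 2 : ℝ) < 1)
    set L := max N K with hL
    refine ⟨nSeq (L + 2), ?_, ?_⟩
    · calc N ≤ L := le_max_left _ _
        _ ≤ L + 2 := by omega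
        _ ≤ nSeq (L + 2) := nseq_ge _
    · calc (countUpTo (⋃ k, Ablock k) (nSeq (L + 2)) : ℝ) / Real.sqrt (nSeq (L + 2))
          ≤ 2 + (1 / 2) ^ (L + 1) := ratio_bound L
        _ ≤ 2 + (1 / 2) ^ K := by
            have hKL : K ≤ L + 1 := le_trans (le_max_right N K) (Nat.le_succ L)
            have := pow_le_pow_of_le_one (by norm_num : (0:ℝ) ≤ 1/2)
              (by norm_num : (1/2:ℝ) ≤ 1) hKL
            linarith
        _ ≤ 2 + ε := by linarith
  · exact Filter.isBoundedUnder_of ⟨0, fun n =>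
      div_nonneg (Nat.cast_nonneg _) (Real.sqrt_nonneg _)⟩
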